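/- Let N ≥ 3 and b > 0, and let W(x) = (1 + |x|^{2+b}/((N+b)(N−2)))^{−(N−2)/(2+b)}. Then ‖∇W‖_{L²}² = ∫_{ℝ^N} |x|^b W(x)^{(2N+2b)/(N−2)} dx, and consequently the energy E(W) = ½‖∇W‖_{L²}² − [(N−2)/(2N+2b)] ∫_{ℝ^N} |x|^b W(x)^{(2N+2b)/(N−2)} dx satisfies E(W) = [(b+2)/(2N+2b)] ‖∇W‖_{L²}². -/

import Mathlib

open MeasureTheory Filter
open scoped ENNReal NNReal BigOperators

noncomputable section

abbrev Euc (N : ℕ) := EuclideanSpace ℝ (Fin N)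

/-- `L²` norm of the gradient: `(∫ |∇f|²)^{1/2}` with `|∇f|² = ∑ᵢ |∂ᵢ f|²`. -/
noncomputable def gradL2norm {N : ℕ} {F : Type*} [NormedAddCommGroup F] [NormedSpace ℝ F]
    (f : Euc N → F) : ℝ :=
  Real.sqrt (∫ x : Euc N, ∑ i : Fin N, ‖fderiv ℝ f x (EuclideanSpace.single i 1)‖ ^ 2)

/-- The explicit energy-critical ground state
`W(x) = (1 + |x|^{2+b}/((N+b)(N-2)))^{-(N-2)/(2+b)}`. -/
noncomputable def Wfun (N : ℕ) (b : ℝ) (x : Euc N) : ℝ :=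
  (1 + ‖x‖ ^ (2 + b) / (((N : ℝ) + b) * ((N : ℝ) - 2))) ^ (-(((N : ℝ) - 2) / (2 + b)))

/-- The energy-critical energy functional
`E(f) = ½‖∇f‖² - ((N-2)/(2N+2b)) ∫ |x|^b |f|^{(2N+2b)/(N-2)}`. -/
noncomputable def energyCrit (N : ℕ) (b : ℝ) (f : Euc N → ℝ) : ℝ :=
  (1 / 2) * gradL2norm f ^ 2 -
    (((N : ℝ) - 2) / (2 * (N : ℝ) + 2 * b)) *
      ∫ x : Euc N, ‖x‖ ^ b * |f x| ^ ((2 * (N : ℝ) + 2 * b) / ((N : ℝ) - 2))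

section Aux

open Set
open scoped Topology

private lemma pow_aux_int {b c e β : ℝ} (hc : 0 < c) (hβ : 0 < β)
    (he : 0 ≤ e) (hd : e - (2 + b) * β < -1) :
    IntegrableOn (fun r : ℝ => r ^ e * (1 + r ^ (2 + b) / c) ^ (-β)) (Ioi (0:ℝ)) := by
  have hcont : ContinuousOn (fun r : ℝ => r ^ e * (1 + r ^ (2 + b) / c) ^ (-β)) (Ioi 0) := by
    intro r hr
    have hr0 : (0:ℝ) < r := hr
    have h1 : ContinuousAt (fun r : ℝ => r ^ e) r :=
      Real.continuousAt_rpow_const r e (Or.inl hr0.ne')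
    have h2 : ContinuousAt (fun r : ℝ => (1 + r ^ (2 + b) / c) ^ (-β)) r := by
      have hbase : ContinuousAt (fun r : ℝ => 1 + r ^ (2 + b) / c) r :=
        (continuousAt_const.add ((Real.continuousAt_rpow_const r (2 + b)
          (Or.inl hr0.ne')).div_const c))
      have hpos : (0:ℝ) < 1 + r ^ (2 + b) / c := by positivity
      exact hbase.rpow_const (Or.inl hpos.ne')
    exact (h1.mul h2).continuousWithinAt
  have key : ∀ r : ℝ, 0 < r → 0 ≤ r ^ e * (1 + r ^ (2 + b) / c) ^ (-β) := by
    intro r hr; positivity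
  rw [← Ioc_union_Ioi_eq_Ioi (zero_le_one : (0:ℝ) ≤ 1)]
  refine IntegrableOn.union ?_ ?_
  · refine Integrable.mono' (g := fun _ => (1:ℝ))
      (integrableOn_const measure_Ioc_lt_top.ne) ?_ ?_
    · exact (hcont.mono Ioc_subset_Ioi_self).aestronglyMeasurable measurableSet_Ioc
    · refine (ae_restrict_iff' measurableSet_Ioc).2 (Filter.Eventually.of_forall ?_)
      intro r hr
      have hr0 : (0:ℝ) < r := hr.1
      have h1 : r ^ e ≤ 1 := Real.rpow_le_one hr0.le hr.2 he
      have h2 : (1 + r ^ (2 + b) / c) ^ (-β) ≤ 1 := by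
        refine Real.rpow_le_one_of_one_le_of_nonpos ?_ (by linarith)
        have : 0 ≤ r ^ (2 + b) / c := by positivity
        linarith
      rw [Real.norm_eq_abs, abs_of_nonneg (key r hr0)]
      calc r ^ e * (1 + r ^ (2 + b) / c) ^ (-β) ≤ 1 * 1 := by
            apply mul_le_mul h1 h2 (by positivity) zero_le_one
        _ = 1 := by ring
  · have hint : IntegrableOn (fun r : ℝ => c ^ β * r ^ (e - (2 + b) * β)) (Ioi 1) :=
      (integrableOn_Ioi_rpow_of_lt hd zero_lt_one).const_mul _
    refine Integrable.mono' hint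
      ((hcont.mono (Ioi_subset_Ioi zero_le_one)).aestronglyMeasurable measurableSet_Ioi) ?_
    refine (ae_restrict_iff' measurableSet_Ioi).2 (Filter.Eventually.of_forall ?_)
    intro r hr
    have hr0 : (0:ℝ) < r := lt_trans zero_lt_one hr
    have hvpos : (0:ℝ) < r ^ (2 + b) / c := by positivity
    have h2 : (1 + r ^ (2 + b) / c) ^ (-β) ≤ (r ^ (2 + b) / c) ^ (-β) :=
      Real.rpow_le_rpow_of_nonpos hvpos (by linarith) (by linarith)
    have h3 : (r ^ (2 + b) / c) ^ (-β) = c ^ β * r ^ ((2 + b) * (-β)) := by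
      rw [Real.div_rpow (by positivity) hc.le, ← Real.rpow_mul hr0.le,
        Real.rpow_neg hc.le]
      field_simp
    rw [Real.norm_eq_abs, abs_of_nonneg (key r hr0)]
    calc r ^ e * (1 + r ^ (2 + b) / c) ^ (-β) ≤ r ^ e * (c ^ β * r ^ ((2 + b) * (-β))) := by
          apply mul_le_mul_of_nonneg_left (le_of_le_of_eq h2 h3) (by positivity)
      _ = c ^ β * r ^ (e - (2 + b) * β) := by
          rw [← mul_assoc, mul_comm (r ^ e), mul_assoc, ← Real.rpow_add hr0]
          ring_nf

private lemma ftc_key {b n c β : ℝ} (hb : 0 < b) (hn : 3 ≤ n) (hc : c = (n + b) * (n - 2))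
    (hβ : β = 2 * (n + b) / (2 + b)) :
    (n + b) * (∫ r in Ioi (0:ℝ), r ^ (n + b - 1) * (1 + r ^ (2 + b) / c) ^ (-β)) =
      ((n - 2) / c) *
        (∫ r in Ioi (0:ℝ), r ^ (n + 2 * b + 1) * (1 + r ^ (2 + b) / c) ^ (-β)) := by
  have hc0 : 0 < c := by rw [hc]; nlinarith
  have hβ1 : 1 ≤ β := by rw [hβ]; rw [le_div_iff₀ (by linarith)]; nlinarith
  have hβ0 : 0 < β := by linarith
  have hβ2 : (2 + b) * β = 2 * (n + b) := by rw [hβ]; field_simp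
  set A : ℝ → ℝ := fun r => 1 + r ^ (2 + b) / c with hA
  have hApos : ∀ r : ℝ, 0 ≤ r → 0 < A r := by
    intro r hr
    have : 0 ≤ r ^ (2 + b) / c := by positivity
    simp only [hA]; linarith
  set G : ℝ → ℝ := fun r => r ^ (n + b) * A r ^ (1 - β) with hG
  set F : ℝ → ℝ := fun r =>
    (n + b) * (r ^ (n + b - 1) * A r ^ (-β)) -
      ((n - 2) / c) * (r ^ (n + 2 * b + 1) * A r ^ (-β)) with hF
  have hderiv : ∀ r ∈ Ioi (0:ℝ), HasDerivAt G (F r) r := by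
    intro r hr
    have hr0 : (0:ℝ) < r := hr
    have hAr : 0 < A r := hApos r hr0.le
    have hdA : HasDerivAt A ((2 + b) * r ^ (1 + b) / c) r := by
      have h1 : HasDerivAt (fun r : ℝ => r ^ (2 + b)) ((2 + b) * r ^ (2 + b - 1)) r :=
        Real.hasDerivAt_rpow_const (Or.inl hr0.ne')
      have h2 := (h1.div_const c).const_add 1
      rw [show (2:ℝ) + b - 1 = 1 + b by ring] at h2
      exact h2
    have hd1 : HasDerivAt (fun r : ℝ => A r ^ (1 - β))
        ((2 + b) * r ^ (1 + b) / c * (1 - β) * A r ^ (1 - β - 1)) r :=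
      hdA.rpow_const (Or.inl hAr.ne')
    have hd2 : HasDerivAt (fun r : ℝ => r ^ (n + b)) ((n + b) * r ^ (n + b - 1)) r :=
      Real.hasDerivAt_rpow_const (Or.inl hr0.ne')
    have hd3 := hd2.mul hd1
    refine hd3.congr_deriv (Eq.symm ?_)
    have e1 : A r ^ (1 - β) = A r * A r ^ (-β) := by
      rw [show (1:ℝ) - β = 1 + (-β) by ring, Real.rpow_add hAr, Real.rpow_one]
    have e2 : A r ^ (1 - β - 1) = A r ^ (-β) := by norm_num
    have e3 : r ^ (n + b) * r ^ (1 + b) = r ^ (n + 2 * b + 1) := by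
      rw [← Real.rpow_add hr0]; ring_nf
    have e4 : r ^ (n + b - 1) * r ^ (2 + b) = r ^ (n + 2 * b + 1) := by
      rw [← Real.rpow_add hr0]; ring_nf
    simp only [hF]
    rw [e2, e1]
    have expand : (n + b) * r ^ (n + b - 1) * (A r * A r ^ (-β)) =
        (n + b) * (r ^ (n + b - 1) * A r ^ (-β)) +
          ((n + b) / c) * (r ^ (n + 2 * b + 1) * A r ^ (-β)) := by
      simp only [hA]
      linear_combination ((n + b) / c * (1 + r ^ (2 + b) / c) ^ (-β)) * e4
    rw [expand]
    have e5 : r ^ (n + b) * ((2 + b) * r ^ (1 + b) / c * (1 - β) * A r ^ (-β)) =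
        ((2 + b) * (1 - β) / c) * (r ^ (n + 2 * b + 1) * A r ^ (-β)) := by
      rw [← e3]; ring
    rw [e5]
    have e6 : (2 + b) * (1 - β) = 2 + b - 2 * (n + b) := by
      rw [mul_sub, mul_one, hβ2]
    rw [e6]; ring
  have hT1 : IntegrableOn (fun r : ℝ => r ^ (n + b - 1) * A r ^ (-β)) (Ioi (0:ℝ)) := by
    simp only [hA]
    exact pow_aux_int hc0 hβ0 (by linarith) (by rw [hβ2]; linarith)
  have hT2 : IntegrableOn (fun r : ℝ => r ^ (n + 2 * b + 1) * A r ^ (-β)) (Ioi (0:ℝ)) := by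
    simp only [hA]
    exact pow_aux_int hc0 hβ0 (by linarith) (by rw [hβ2]; linarith)
  have hFint : IntegrableOn F (Ioi (0:ℝ)) := by
    simp only [hF]
    exact (hT1.const_mul _).sub (hT2.const_mul _)
  have hcont : ContinuousWithinAt G (Ici (0:ℝ)) 0 := by
    apply ContinuousAt.continuousWithinAt
    have h1 : ContinuousAt (fun r : ℝ => r ^ (n + b)) 0 :=
      Real.continuousAt_rpow_const 0 _ (Or.inr (by linarith))
    have h2 : ContinuousAt A 0 := by
      simp only [hA]
      exact continuousAt_const.add
        ((Real.continuousAt_rpow_const 0 _ (Or.inr (by linarith))).div_const c)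
    exact h1.mul (h2.rpow_const (Or.inl (hApos 0 le_rfl).ne'))
  have hG0 : G 0 = 0 := by
    simp only [hG]
    rw [Real.zero_rpow (by positivity : n + b ≠ 0), zero_mul]
  have htop : Tendsto G atTop (𝓝 (0:ℝ)) := by
    apply squeeze_zero' (g := fun r : ℝ => c ^ (β - 1) * r ^ (-(n - 2)))
    · filter_upwards [eventually_gt_atTop (0:ℝ)] with r hr
      exact mul_nonneg (Real.rpow_nonneg hr.le _) (Real.rpow_nonneg (hApos r hr.le).le _)
    · filter_upwards [eventually_gt_atTop (0:ℝ)] with r hr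
      have hv : (0:ℝ) < r ^ (2 + b) / c := by positivity
      have h1 : A r ^ (1 - β) ≤ (r ^ (2 + b) / c) ^ (1 - β) := by
        refine Real.rpow_le_rpow_of_nonpos hv ?_ (by linarith)
        simp only [hA]; linarith
      have h2 : (r ^ (2 + b) / c) ^ (1 - β) = c ^ (β - 1) * r ^ ((2 + b) * (1 - β)) := by
        rw [Real.div_rpow (by positivity) hc0.le, ← Real.rpow_mul hr.le,
          div_eq_mul_inv, ← Real.rpow_neg hc0.le, mul_comm]
        norm_num
      have h3 : r ^ (n + b) * r ^ ((2 + b) * (1 - β)) = r ^ (-(n - 2)) := by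
        rw [← Real.rpow_add hr]
        congr 1
        have : (2 + b) * (1 - β) = 2 + b - 2 * (n + b) := by
          rw [mul_sub, mul_one, hβ2]
        rw [this]; ring
      calc G r ≤ r ^ (n + b) * (c ^ (β - 1) * r ^ ((2 + b) * (1 - β))) := by
            exact mul_le_mul_of_nonneg_left (le_of_le_of_eq h1 h2) (Real.rpow_nonneg hr.le _)
        _ = c ^ (β - 1) * r ^ (-(n - 2)) := by rw [← h3]; ring
    · have := (tendsto_rpow_neg_atTop (by linarith : (0:ℝ) < n - 2)).const_mul
        (c ^ (β - 1))
      simpa using this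
  have hint0 : ∫ r in Ioi (0:ℝ), F r = 0 - G 0 :=
    integral_Ioi_of_hasDerivAt_of_tendsto hcont hderiv hFint htop
  rw [hG0, sub_zero] at hint0
  have hsplit : ∫ r in Ioi (0:ℝ), F r =
      (n + b) * (∫ r in Ioi (0:ℝ), r ^ (n + b - 1) * A r ^ (-β)) -
        ((n - 2) / c) * (∫ r in Ioi (0:ℝ), r ^ (n + 2 * b + 1) * A r ^ (-β)) := by
    simp only [hF]
    rw [integral_sub (hT1.const_mul _) (hT2.const_mul _), integral_const_mul, integral_const_mul]
  rw [hint0] at hsplit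
  simp only [hA] at hsplit ⊢
  linarith

private lemma grad_pointwise (N : ℕ) (b : ℝ) (hN : 3 ≤ N) (hb : 0 < b) (x : Euc N) :
    ∑ i : Fin N, ‖fderiv ℝ (Wfun N b) x (EuclideanSpace.single i 1)‖ ^ 2 =
      (fun t : ℝ => ((-(((N : ℝ) - 2) / (2 + b))) *
          (1 + t ^ (2 + b) / (((N : ℝ) + b) * ((N : ℝ) - 2))) ^
            ((-(((N : ℝ) - 2) / (2 + b))) - 1) *
          ((2 + b) * t ^ b) / (((N : ℝ) + b) * ((N : ℝ) - 2))) ^ 2 * t ^ 2) ‖x‖ := by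
  have hn : (3:ℝ) ≤ (N:ℝ) := by exact_mod_cast hN
  set n : ℝ := (N:ℝ)
  set c : ℝ := (n + b) * (n - 2) with hc
  set q : ℝ := -((n - 2) / (2 + b)) with hq
  have hc0 : (0:ℝ) < c := by rw [hc]; nlinarith
  have hp1 : (1:ℝ) < 2 + b := by linarith
  have h1 : HasFDerivAt (fun y : Euc N => ‖y‖ ^ (2 + b))
      (((2 + b) * ‖x‖ ^ (2 + b - 2)) • innerSL ℝ x) x := hasFDerivAt_norm_rpow x hp1
  have h2 : HasFDerivAt (fun y : Euc N => 1 + ‖y‖ ^ (2 + b) / c)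
      ((c⁻¹ * ((2 + b) * ‖x‖ ^ (2 + b - 2))) • innerSL ℝ x) x := by
    have := (h1.mul_const c⁻¹).const_add 1
    simpa [div_eq_mul_inv, smul_smul, mul_comm] using this
  have hApos : (0:ℝ) < 1 + ‖x‖ ^ (2 + b) / c := by positivity
  have h3 := h2.rpow_const (p := q) (Or.inl hApos.ne')
  have hW : HasFDerivAt (Wfun N b)
      ((q * (1 + ‖x‖ ^ (2 + b) / c) ^ (q - 1)) •
        ((c⁻¹ * ((2 + b) * ‖x‖ ^ (2 + b - 2))) • innerSL ℝ x)) x := h3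
  rw [hW.fderiv]
  have happ : ∀ i : Fin N,
      ((q * (1 + ‖x‖ ^ (2 + b) / c) ^ (q - 1)) •
        ((c⁻¹ * ((2 + b) * ‖x‖ ^ (2 + b - 2))) • innerSL ℝ x)) (EuclideanSpace.single i 1) =
      (q * (1 + ‖x‖ ^ (2 + b) / c) ^ (q - 1) * ((2 + b) * ‖x‖ ^ b) / c) * x i := by
    intro i
    simp [real_inner_comm, EuclideanSpace.inner_single_left, EuclideanSpace.inner_single_right, show (2:ℝ) + b - 2 = b by ring]
    ring
  simp only [happ]
  have hsum : ∑ i : Fin N,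
        ‖(q * (1 + ‖x‖ ^ (2 + b) / c) ^ (q - 1) * ((2 + b) * ‖x‖ ^ b) / c) * x i‖ ^ 2
      = (q * (1 + ‖x‖ ^ (2 + b) / c) ^ (q - 1) * ((2 + b) * ‖x‖ ^ b) / c) ^ 2 *
        ∑ i : Fin N, (x i) ^ 2 := by
    rw [Finset.mul_sum]
    congr 1; funext i
    rw [Real.norm_eq_abs, sq_abs]; ring
  rw [hsum]
  have hns : ∑ i : Fin N, (x i) ^ 2 = ‖x‖ ^ 2 := by
    rw [EuclideanSpace.norm_eq, Real.sq_sqrt (by positivity)]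
    simp [Real.norm_eq_abs, sq_abs]
  rw [hns]

end Aux

/-- Pohozaev-type identity and energy of the energy-critical ground state `W`
(Corollary 5.7 of the paper). -/
theorem Wfun_energy_identities (N : ℕ) (b : ℝ) (hN : 3 ≤ N) (hb : 0 < b) :
    gradL2norm (Wfun N b) ^ 2 =
        (∫ x : Euc N, ‖x‖ ^ b * Wfun N b x ^ ((2 * (N : ℝ) + 2 * b) / ((N : ℝ) - 2))) ∧
      energyCrit N b (Wfun N b) =
        ((b + 2) / (2 * (N : ℝ) + 2 * b)) * gradL2norm (Wfun N b) ^ 2 := by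
  rw [energyCrit]
  have hn : (3:ℝ) ≤ (N:ℝ) := by exact_mod_cast hN
  set n : ℝ := (N:ℝ) with hndef
  set c : ℝ := (n + b) * (n - 2) with hc
  set q : ℝ := -((n - 2) / (2 + b)) with hq
  set p : ℝ := (2 * n + 2 * b) / (n - 2) with hp
  set β : ℝ := 2 * (n + b) / (2 + b) with hβ
  have hc0 : (0:ℝ) < c := by rw [hc]; nlinarith
  have hn2 : n - 2 ≠ 0 := by intro h; nlinarith [h]
  have hnb : n + b ≠ 0 := by nlinarith
  have h2b : (2:ℝ) + b ≠ 0 := by linarith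
  haveI : Nonempty (Fin N) := ⟨⟨0, by omega⟩⟩
  set h : ℝ → ℝ := fun t =>
    (q * (1 + t ^ (2 + b) / c) ^ (q - 1) * ((2 + b) * t ^ b) / c) ^ 2 * t ^ 2 with hh
  set k : ℝ → ℝ := fun t => t ^ b * ((1 + t ^ (2 + b) / c) ^ q) ^ p with hk
  have hsq : gradL2norm (Wfun N b) ^ 2 =
      ∫ x : Euc N, ∑ i : Fin N, ‖fderiv ℝ (Wfun N b) x (EuclideanSpace.single i 1)‖ ^ 2 :=
    Real.sq_sqrt (integral_nonneg fun x => Finset.sum_nonneg fun i _ => sq_nonneg _)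
  have L1 : (∫ x : Euc N, ∑ i : Fin N,
        ‖fderiv ℝ (Wfun N b) x (EuclideanSpace.single i 1)‖ ^ 2) =
      ∫ x : Euc N, h ‖x‖ := by
    refine integral_congr_ae (Eventually.of_forall fun x => ?_)
    exact grad_pointwise N b hN hb x
  have L2 : (∫ x : Euc N, ‖x‖ ^ b * Wfun N b x ^ p) = ∫ x : Euc N, k ‖x‖ := by
    refine integral_congr_ae (Eventually.of_forall fun x => ?_)
    rfl
  have hHaar := integral_fun_norm_addHaar (volume : Measure (Euc N)) h
  have hHaar2 := integral_fun_norm_addHaar (volume : Measure (Euc N)) k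
  rw [finrank_euclideanSpace_fin] at hHaar hHaar2
  have hWpos : ∀ x : Euc N, 0 < Wfun N b x := by
    intro x
    have hn' : (3:ℝ) ≤ (N:ℝ) := by exact_mod_cast hN
    have hcl : (0:ℝ) < ((N:ℝ) + b) * ((N:ℝ) - 2) := by nlinarith
    have h0 : (0:ℝ) ≤ ‖x‖ ^ (2 + b) / (((N:ℝ) + b) * ((N:ℝ) - 2)) :=
      div_nonneg (Real.rpow_nonneg (norm_nonneg x) _) hcl.le
    exact Real.rpow_pos_of_pos (by linarith) _
  clear_value n c q p β h k
  have e1 : ∀ r ∈ Set.Ioi (0:ℝ), r ^ (N - 1) • h r =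
      ((n - 2) ^ 2 / c ^ 2) * (r ^ (n + 2 * b + 1) * (1 + r ^ (2 + b) / c) ^ (-β)) := by
    intro r hr
    have hr0 : (0:ℝ) < r := hr
    have hApos : (0:ℝ) < 1 + r ^ (2 + b) / c := by positivity
    have hnat : (r : ℝ) ^ (N - 1) = r ^ (n - 1) := by
      rw [← Real.rpow_natCast r (N - 1)]
      congr 1
      have h1 : (1:ℕ) ≤ N := by omega
      push_cast [Nat.cast_sub h1]
      rw [hndef]
    have h5 : ((1 + r ^ (2 + b) / c) ^ (q - 1)) ^ 2 = (1 + r ^ (2 + b) / c) ^ (-β) := by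
      rw [← Real.rpow_natCast ((1 + r ^ (2 + b) / c) ^ (q - 1)) 2,
        ← Real.rpow_mul hApos.le]
      congr 1
      rw [hq, hβ]
      push_cast
      field_simp
      ring
    have h6 : r ^ (n - 1) * ((r ^ b) ^ 2 * r ^ 2) = r ^ (n + 2 * b + 1) := by
      rw [← Real.rpow_natCast (r ^ b) 2, ← Real.rpow_mul hr0.le,
        ← Real.rpow_natCast r 2, ← Real.rpow_add hr0, ← Real.rpow_add hr0]
      norm_num
      ring_nf
    have hq2 : q * (2 + b) = -(n - 2) := by rw [hq]; field_simp
    rw [smul_eq_mul, hnat]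
    simp only [hh]
    have expand : r ^ (n - 1) *
        ((q * (1 + r ^ (2 + b) / c) ^ (q - 1) * ((2 + b) * r ^ b) / c) ^ 2 * r ^ 2) =
        (q * (2 + b)) ^ 2 / c ^ 2 * (((1 + r ^ (2 + b) / c) ^ (q - 1)) ^ 2 *
          (r ^ (n - 1) * ((r ^ b) ^ 2 * r ^ 2))) := by ring
    rw [expand, h5, h6, hq2]
    ring
  have e2 : ∀ r ∈ Set.Ioi (0:ℝ), r ^ (N - 1) • k r =
      r ^ (n + b - 1) * (1 + r ^ (2 + b) / c) ^ (-β) := by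
    intro r hr
    have hr0 : (0:ℝ) < r := hr
    have hApos : (0:ℝ) < 1 + r ^ (2 + b) / c := by positivity
    have hnat : (r : ℝ) ^ (N - 1) = r ^ (n - 1) := by
      rw [← Real.rpow_natCast r (N - 1)]
      congr 1
      have h1 : (1:ℕ) ≤ N := by omega
      push_cast [Nat.cast_sub h1]
      rw [hndef]
    have h7 : ((1 + r ^ (2 + b) / c) ^ q) ^ p = (1 + r ^ (2 + b) / c) ^ (-β) := by
      rw [← Real.rpow_mul hApos.le]
      congr 1
      rw [hq, hp, hβ]
      field_simp
    have h8 : r ^ (n - 1) * r ^ b = r ^ (n + b - 1) := by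
      rw [← Real.rpow_add hr0]; ring_nf
    rw [smul_eq_mul, hnat]
    simp only [hk]
    rw [h7]
    linear_combination ((1 + r ^ (2 + b) / c) ^ (-β)) * h8
  have I1eq : (∫ r in Set.Ioi (0:ℝ), r ^ (N - 1) • h r) =
      ((n - 2) ^ 2 / c ^ 2) *
        ∫ r in Set.Ioi (0:ℝ), r ^ (n + 2 * b + 1) * (1 + r ^ (2 + b) / c) ^ (-β) := by
    rw [setIntegral_congr_fun measurableSet_Ioi (fun r hr => e1 r hr), integral_const_mul]
  have I2eq : (∫ r in Set.Ioi (0:ℝ), r ^ (N - 1) • k r) =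
      ∫ r in Set.Ioi (0:ℝ), r ^ (n + b - 1) * (1 + r ^ (2 + b) / c) ^ (-β) :=
    setIntegral_congr_fun measurableSet_Ioi (fun r hr => e2 r hr)
  have hkey := ftc_key hb hn hc hβ
  have main1d : (∫ r in Set.Ioi (0:ℝ), r ^ (N - 1) • h r) =
      ∫ r in Set.Ioi (0:ℝ), r ^ (N - 1) • k r := by
    rw [I1eq, I2eq]
    have step : ((n - 2) ^ 2 / c ^ 2) *
        (∫ r in Set.Ioi (0:ℝ), r ^ (n + 2 * b + 1) * (1 + r ^ (2 + b) / c) ^ (-β)) =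
        ((n - 2) / c) * (((n - 2) / c) *
          ∫ r in Set.Ioi (0:ℝ), r ^ (n + 2 * b + 1) * (1 + r ^ (2 + b) / c) ^ (-β)) := by
      ring
    rw [step, ← hkey]
    rw [hc]
    field_simp
  have part1 : gradL2norm (Wfun N b) ^ 2 =
      ∫ x : Euc N, ‖x‖ ^ b * Wfun N b x ^ p := by
    rw [hsq, L1, hHaar, main1d, ← hHaar2, ← L2]
  refine ⟨part1, ?_⟩
  have habs : (∫ x : Euc N, ‖x‖ ^ b * |Wfun N b x| ^ p) =
      ∫ x : Euc N, ‖x‖ ^ b * Wfun N b x ^ p := by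
    refine integral_congr_ae (Eventually.of_forall fun x => ?_)
    simp only [abs_of_pos (hWpos x)]
  have h2nb : 2 * n + 2 * b ≠ 0 := by nlinarith
  rw [habs, ← part1]
  field_simp
  ring
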